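/- Let s ≠ 0, s²+4t > 0, q = φ'/φ with |q| < 1, and x > 0. Then Exp'_{s,t}(x) < e^x, where Exp'_{s,t}(x) = Π_{k=0}^∞ (1 + x(1−q)q^k); and if moreover 0 < x < 1/(1−q), then e^x < Exp_{s,t}(x) = Π_{k=0}^∞ (1 − (1−q)q^k x)^{-1}. -/

import Mathlib

open Real

private lemma tprod_eq_exp_tsum_log {f : ℕ → ℝ} (hf : ∀ k, 0 < f k)
    (hs : Summable fun k => Real.log (f k)) :
    (∏' k : ℕ, f k) = Real.exp (∑' k : ℕ, Real.log (f k)) := by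
  have h := hs.hasSum.rexp
  have heq : (Real.exp ∘ fun k => Real.log (f k)) = f :=
    funext fun k => Real.exp_log (hf k)
  rw [heq] at h
  exact h.tprod_eq

/-- Bounds for the (s,t)-exponential infinite products: for 0 < q < 1 and x > 0,
Exp'_{s,t}(x) = Π (1 + x(1−q)qᵏ) < eˣ, and if moreover x < 1/(1−q) then
eˣ < Exp_{s,t}(x) = Π (1 − (1−q)qᵏx)⁻¹. -/
theorem ExpST_product_bounds (s t : ℝ) (hs : s ≠ 0) (hd : 0 < s ^ 2 + 4 * t)
    (φ φ' q : ℝ)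
    (hφ : φ = (s + Real.sqrt (s ^ 2 + 4 * t)) / 2)
    (hφ' : φ' = (s - Real.sqrt (s ^ 2 + 4 * t)) / 2)
    (hq : q = φ' / φ) (hq0 : 0 < q) (hq1 : q < 1)
    (x : ℝ) (hx : 0 < x) :
    (∏' k : ℕ, (1 + x * (1 - q) * q ^ k)) < Real.exp x ∧
    (x < 1 / (1 - q) →
      Real.exp x < ∏' k : ℕ, (1 - (1 - q) * q ^ k * x)⁻¹) := by
  clear hs hd hφ hφ' hq
  have hc0 : 0 < 1 - q := by linarith
  have hqnn : 0 ≤ q := hq0.le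
  have hgeos : Summable (fun k : ℕ => q ^ k) := summable_geometric_of_lt_one hqnn hq1
  have hgeo : ∑' k : ℕ, q ^ k = (1 - q)⁻¹ := tsum_geometric_of_lt_one hqnn hq1
  constructor
  · -- first inequality
    set f : ℕ → ℝ := fun k => x * (1 - q) * q ^ k with hf
    have hfpos : ∀ k, 0 < f k := fun k => by positivity
    have hfsum : Summable f := hgeos.mul_left _
    have hfs : ∑' k, f k = x := by
      rw [hf, tsum_mul_left, hgeo]
      field_simp
    have hlog_lt : ∀ k, Real.log (1 + f k) < f k := by
      intro k
      have h1 : (0:ℝ) < 1 + f k := by linarith [hfpos k]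
      have h2 := Real.add_one_lt_exp (ne_of_gt (hfpos k))
      calc Real.log (1 + f k) < Real.log (Real.exp (f k)) :=
            Real.log_lt_log h1 (by linarith)
        _ = f k := Real.log_exp _
    have hlog_nonneg : ∀ k, 0 ≤ Real.log (1 + f k) := by
      intro k
      apply Real.log_nonneg
      have := hfpos k
      linarith
    have hlogsum : Summable (fun k => Real.log (1 + f k)) :=
      Summable.of_nonneg_of_le hlog_nonneg (fun k => (hlog_lt k).le) hfsum
    have hsumlt : ∑' k, Real.log (1 + f k) < x := by
      rw [← hfs]
      exact Summable.tsum_lt_tsum (fun k => (hlog_lt k).le) (hlog_lt 0) hlogsum hfsum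
    have hprod := tprod_eq_exp_tsum_log (f := fun k => 1 + f k)
      (fun k => by show (0:ℝ) < 1 + f k; linarith [hfpos k]) hlogsum
    rw [hprod]
    exact Real.exp_lt_exp.mpr hsumlt
  · -- second inequality
    intro hx1
    set g : ℕ → ℝ := fun k => (1 - q) * q ^ k * x with hg
    have hgpos : ∀ k, 0 < g k := fun k => by positivity
    have hgle : ∀ k, g k ≤ g 0 := by
      intro k
      have hqk : q ^ k ≤ 1 := pow_le_one₀ hqnn hq1.le
      have : (1 - q) * q ^ k * x ≤ (1 - q) * 1 * x := by
        apply mul_le_mul_of_nonneg_right _ hx.le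
        exact mul_le_mul_of_nonneg_left hqk hc0.le
      simpa [hg] using this
    have hg0lt : g 0 < 1 := by
      have h : x * (1 - q) < 1 := by
        rw [lt_div_iff₀ hc0] at hx1
        linarith
      show (1 - q) * q ^ 0 * x < 1
      rw [pow_zero, mul_one, mul_comm]
      exact h
    have h1g : ∀ k, 0 < 1 - g k := fun k => by linarith [hgle k]
    have hgsum : Summable g := by
      have : Summable (fun k : ℕ => (1 - q) * q ^ k * x) := (hgeos.mul_left _).mul_right _
      exact this
    have hgs : ∑' k, g k = x := by
      rw [hg]
      rw [tsum_mul_right, tsum_mul_left, hgeo]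
      field_simp
    -- strict lower bound: g k < log ((1 - g k)⁻¹)
    have hlog_gt : ∀ k, g k < Real.log ((1 - g k)⁻¹) := by
      intro k
      have h2 := Real.add_one_lt_exp (by linarith [hgpos k] : -(g k) ≠ 0)
      have h3 : 1 - g k < Real.exp (-(g k)) := by linarith
      have h4 : Real.log (1 - g k) < -(g k) := by
        calc Real.log (1 - g k) < Real.log (Real.exp (-(g k))) :=
              Real.log_lt_log (h1g k) h3
          _ = -(g k) := Real.log_exp _
      rw [Real.log_inv]
      linarith
    -- summability of the logs
    have hlog_le : ∀ k, Real.log ((1 - g k)⁻¹) ≤ g k * (1 - g 0)⁻¹ := by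
      intro k
      have hpos : (0:ℝ) < (1 - g k)⁻¹ := inv_pos.mpr (h1g k)
      have h5 := Real.log_le_sub_one_of_pos hpos
      have hne := (h1g k).ne'
      have h6 : (1 - g k)⁻¹ - 1 = g k / (1 - g k) := by
        field_simp
        ring
      have h7 : g k / (1 - g k) ≤ g k / (1 - g 0) := by
        have h8 : 0 < 1 - g 0 := by linarith
        apply div_le_div_of_nonneg_left (hgpos k).le h8
        linarith [hgle k]
      calc Real.log ((1 - g k)⁻¹) ≤ (1 - g k)⁻¹ - 1 := h5
        _ = g k / (1 - g k) := h6
        _ ≤ g k / (1 - g 0) := h7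
        _ = g k * (1 - g 0)⁻¹ := div_eq_mul_inv _ _
    have hlogsum : Summable (fun k => Real.log ((1 - g k)⁻¹)) :=
      Summable.of_nonneg_of_le (fun k => le_of_lt ((hgpos k).trans (hlog_gt k)))
        hlog_le (hgsum.mul_right _)
    have hsumlt : x < ∑' k, Real.log ((1 - g k)⁻¹) := by
      rw [← hgs]
      exact Summable.tsum_lt_tsum (fun k => (hlog_gt k).le) (hlog_gt 0) hgsum hlogsum
    have hprod := tprod_eq_exp_tsum_log (f := fun k => (1 - g k)⁻¹)
      (fun k => inv_pos.mpr (h1g k)) hlogsum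
    have hrw : (∏' k : ℕ, (1 - (1 - q) * q ^ k * x)⁻¹) = ∏' k : ℕ, (1 - g k)⁻¹ := by
      rfl
    rw [hrw, hprod]
    exact Real.exp_lt_exp.mpr hsumlt
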